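/- arXiv:2210.01598 — 7 statements merged into one kernel-verified Lean document; each statement's English description precedes it below -/
import Mathlib

section
/- Let D be an oriented graph and let v ∈ V(D) be a transitive vertex, i.e., for all u,w ∈ V(D), if (u,v) ∈ A(D) and (v,w) ∈ A(D) then (u,w) ∈ A(D). Then v belongs to every interval set and to every hull set of D in the geodetic convexity and in the P3* convexity. -/
/-! Basic machinery for convexity on oriented graphs. -/

/-- A directed walk along the arc relation `A` from `u` to `v`,
recorded as the (nonempty) list of its vertices. Its length is `l.length - 1`. -/
def DiWalk {V : Type*} (A : V → V → Prop) (u v : V) (l : List V) : Prop :=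
  l.head? = some u ∧ l.getLast? = some v ∧ l.Chain' A

/-- A shortest directed walk (geodesic) from `u` to `v`:
a directed walk of minimum length among all directed `(u,v)`-walks. -/
def IsGeodesic {V : Type*} (A : V → V → Prop) (u v : V) (l : List V) : Prop :=
  DiWalk A u v l ∧ ∀ l', DiWalk A u v l' → l.length ≤ l'.length

/-- Geodetic interval: `u`, `v`, and all vertices lying on a shortest directed
`(u,v)`-path or on a shortest directed `(v,u)`-path. -/
def geoInterval {V : Type*} (A : V → V → Prop) (u v : V) : Set V :=
  {u, v} ∪ {w | (∃ l, IsGeodesic A u v l ∧ w ∈ l) ∨ (∃ l, IsGeodesic A v u l ∧ w ∈ l)}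

/-- P3 interval: `u`, `v`, and all vertices lying on a directed `(u,v)`- or
`(v,u)`-path of length two. -/
def p3Interval {V : Type*} (A : V → V → Prop) (u v : V) : Set V :=
  {u, v} ∪ {w | (A u w ∧ A w v) ∨ (A v w ∧ A w u)}

/-- P3* interval: `u`, `v`, and all vertices lying on a shortest directed `(u,v)`- or
`(v,u)`-path of length two (i.e. the corresponding endpoints are not adjacent). -/
def p3sInterval {V : Type*} (A : V → V → Prop) (u v : V) : Set V :=
  {u, v} ∪ {w | (A u w ∧ A w v ∧ ¬ A u v) ∨ (A v w ∧ A w u ∧ ¬ A v u)}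

/-- A set is convex for the interval function `I` if it is closed under `I`. -/
def IsConvexSet {V : Type*} (I : V → V → Set V) (C : Set V) : Prop :=
  ∀ u ∈ C, ∀ v ∈ C, I u v ⊆ C

/-- The convex hull of `S`: the smallest convex set containing `S`. -/
def convexHullD {V : Type*} (I : V → V → Set V) (S : Set V) : Set V :=
  ⋂₀ {C | IsConvexSet I C ∧ S ⊆ C}

/-- `S` is an interval set if applying `I` to pairs of `S` covers all vertices. -/
def IsIntervalSet {V : Type*} (I : V → V → Set V) (S : Set V) : Prop :=
  (⋃ u ∈ S, ⋃ v ∈ S, I u v) = Set.univ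

/-- `S` is a hull set if its convex hull is the whole vertex set. -/
def IsHullSet {V : Type*} (I : V → V → Set V) (S : Set V) : Prop :=
  convexHullD I S = Set.univ

/-- The interval number: minimum cardinality of an interval set. -/
noncomputable def intervalNumber {V : Type*} (I : V → V → Set V) : ℕ :=
  sInf {k | ∃ S : Set V, IsIntervalSet I S ∧ S.ncard = k}

/-- The hull number: minimum cardinality of a hull set. -/
noncomputable def hullNumber {V : Type*} (I : V → V → Set V) : ℕ :=
  sInf {k | ∃ S : Set V, IsHullSet I S ∧ S.ncard = k}

/-- `v` is reachable from `u` by a directed walk. -/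
def Reach {V : Type*} (A : V → V → Prop) (u v : V) : Prop :=
  ∃ l, DiWalk A u v l

/-- An oriented graph: no loops and at most one arc between any two vertices. -/
def IsOriented {V : Type*} (A : V → V → Prop) : Prop :=
  ∀ u v, A u v → ¬ A v u

/-- Strong connectivity. -/
def StronglyConnected {V : Type*} (A : V → V → Prop) : Prop :=
  ∀ u v, Reach A u v

/-- Connectivity of the underlying undirected graph. -/
def ConnectedD {V : Type*} (A : V → V → Prop) : Prop :=
  ∀ u v : V, Reach (fun a b => A a b ∨ A b a) u v

/-- A strong component: an equivalence class of mutual reachability. -/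
def IsStrongComponent {V : Type*} (A : V → V → Prop) (C : Set V) : Prop :=
  ∃ v, C = {u | Reach A u v ∧ Reach A v u}

/-- A sink strong component: a strong component with no arc leaving it. -/
def IsSinkComponent {V : Type*} (A : V → V → Prop) (C : Set V) : Prop :=
  IsStrongComponent A C ∧ ∀ u ∈ C, ∀ w, w ∉ C → ¬ A u w

/-- A source strong component: a strong component with no arc entering it. -/
def IsSourceComponent {V : Type*} (A : V → V → Prop) (C : Set V) : Prop :=
  IsStrongComponent A C ∧ ∀ u ∈ C, ∀ w, w ∉ C → ¬ A w u

/-- The out-section of `u`: all vertices reachable from `u`. -/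
def outSection {V : Type*} (A : V → V → Prop) (u : V) : Set V :=
  {w | Reach A u w}

/-- The in-section of `u`: all vertices from which `u` is reachable. -/
def inSection {V : Type*} (A : V → V → Prop) (u : V) : Set V :=
  {w | Reach A w u}

/-- A tournament: an oriented graph where every two distinct vertices are adjacent. -/
def IsTournament {V : Type*} (A : V → V → Prop) : Prop :=
  (∀ u v, A u v → ¬ A v u) ∧ ∀ u v : V, u ≠ v → A u v ∨ A v u

/-- The number of arcs of the digraph given by `A`. -/
noncomputable def arcCount {V : Type*} (A : V → V → Prop) : ℕ :=
  Nat.card {p : V × V // A p.1 p.2}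


/-- If `v` is a transitive vertex and `v ≠ u`, `v ≠ w`, then `v` lies on no
`(u,w)`-geodesic: otherwise shortcutting past `v` gives a shorter walk. -/
lemma transitive_not_mem_geodesic {V : Type*} {A : V → V → Prop} {v : V}
    (hv : ∀ u w, A u v → A v w → A u w) {u w : V} (hu : v ≠ u) (hw : v ≠ w)
    {l : List V} (hg : IsGeodesic A u w l) : v ∉ l := by
  intro hmem
  obtain ⟨⟨hhead, hlast, hchain⟩, hmin⟩ := hg
  obtain ⟨s, t, rfl⟩ := List.append_of_mem hmem
  have hs : s ≠ [] := by
    rintro rfl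
    simp at hhead
    exact hu hhead
  have ht : t ≠ [] := by
    rintro rfl
    rw [List.getLast?_append] at hlast
    simp at hlast
    exact hw hlast
  obtain ⟨b, t', rfl⟩ := List.exists_cons_of_ne_nil ht
  obtain ⟨a, ha⟩ : ∃ a, s.getLast? = some a := by
    cases h : s.getLast? with
    | none => exact absurd (List.getLast?_eq_none_iff.mp h) hs
    | some a => exact ⟨a, rfl⟩
  simp only [List.Chain', List.isChain_append] at hchain
  obtain ⟨hc1, hc2, hc3⟩ := hchain
  have hav : A a v := hc3 a ha v rfl
  rw [List.isChain_cons_cons] at hc2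
  obtain ⟨hvb, hc2'⟩ := hc2
  have hab : A a b := hv a b hav hvb
  obtain ⟨u0, hu0⟩ : ∃ x, s.head? = some x := by
    cases h : s.head? with
    | none => exact absurd (List.head?_eq_none_iff.mp h) hs
    | some x => exact ⟨x, rfl⟩
  have hwalk : DiWalk A u w (s ++ b :: t') := by
    refine ⟨?_, ?_, ?_⟩
    · rw [List.head?_append, hu0]
      rw [List.head?_append, hu0] at hhead
      exact hhead
    · rw [List.getLast?_append]
      rw [List.getLast?_append, List.getLast?_cons_cons] at hlast
      exact hlast
    · simp only [List.Chain', List.isChain_append]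
      refine ⟨hc1, hc2', ?_⟩
      intro x hx y hy
      rw [ha, Option.mem_some_iff] at hx
      simp only [List.head?_cons, Option.mem_some_iff] at hy
      rw [← hx, ← hy]
      exact hab
  have := hmin _ hwalk
  simp [List.length_append] at this

/-- A transitive vertex of an oriented graph belongs to every
interval set and every hull set in the geodetic and P3* convexities. -/
theorem stmt_2 {V : Type*} [Finite V] (A : V → V → Prop) (hA : IsOriented A)
    (v : V) (hv : ∀ u w, A u v → A v w → A u w)
    (I : V → V → Set V)
    (hI : I = geoInterval A ∨ I = p3sInterval A) :
    ∀ S : Set V, (IsIntervalSet I S → v ∈ S) ∧ (IsHullSet I S → v ∈ S) := by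
  -- Key claim: v ∉ I u w whenever u ≠ v and w ≠ v.
  have key : ∀ u w : V, v ≠ u → v ≠ w → v ∉ I u w := by
    intro u w hu hw hmem
    rcases hI with rfl | rfl
    · rcases hmem with (rfl | rfl) | ⟨l, hl, hm⟩ | ⟨l, hl, hm⟩
      · exact hu rfl
      · exact hw rfl
      · exact transitive_not_mem_geodesic hv hu hw hl hm
      · exact transitive_not_mem_geodesic hv hw hu hl hm
    · rcases hmem with (rfl | rfl) | ⟨h1, h2, h3⟩ | ⟨h1, h2, h3⟩
      · exact hu rfl
      · exact hw rfl
      · exact h3 (hv u w h1 h2)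
      · exact h3 (hv w u h1 h2)
  intro S
  constructor
  · intro hS
    have : v ∈ (⋃ u ∈ S, ⋃ w ∈ S, I u w) := by rw [hS]; trivial
    simp only [Set.mem_iUnion] at this
    obtain ⟨u, hu, w, hw, hm⟩ := this
    by_cases h1 : v = u
    · exact h1 ▸ hu
    by_cases h2 : v = w
    · exact h2 ▸ hw
    exact absurd hm (key u w h1 h2)
  · intro hS
    by_contra hvS
    have hconv : IsConvexSet I {v}ᶜ := by
      intro a ha b hb x hx
      intro hxv
      rcases hxv with rfl
      exact key a b (fun h => ha h.symm) (fun h => hb h.symm) hx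
    have hsub : S ⊆ {v}ᶜ := fun x hx hxv => by
      rcases hxv with rfl; exact hvS hx
    have : convexHullD I S ⊆ {v}ᶜ := Set.sInter_subset_of_mem ⟨hconv, hsub⟩
    rw [hS] at this
    exact this (Set.mem_univ v) rfl
end

section
/- Let D be an oriented graph and let D' be a source strong component or a sink strong component of D. Then every interval X-set and every hull X-set of D contains at least one vertex of D', for each X among the geodetic, P3, and P3* convexities. -/
section AuxStmt4
variable {V : Type*} {A : V → V → Prop} {C : Set V}

lemma last_mem_of_closed' (hcl : ∀ a ∈ C, ∀ b, A a b → b ∈ C) :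
    ∀ l : List V, l.Chain' A → (∃ w ∈ l, w ∈ C) → ∀ v, l.getLast? = some v → v ∈ C := by
  intro l
  induction l with
  | nil => rintro _ ⟨w, hw, _⟩ v hv; simp at hw
  | cons a t ih =>
    rintro hch ⟨w, hw, hwC⟩ v hv
    cases t with
    | nil =>
      simp at hw hv; subst hw; subst hv; exact hwC
    | cons b t' =>
      simp only [List.Chain', List.isChain_cons_cons] at hch
      rw [List.getLast?_cons_cons] at hv
      rcases List.mem_cons.mp hw with h | hw
      · exact ih hch.2 ⟨b, List.mem_cons_self, hcl _ (h ▸ hwC) _ hch.1⟩ v hv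
      · exact ih hch.2 ⟨w, hw, hwC⟩ v hv

lemma head_mem_of_closed' (hcl : ∀ b ∈ C, ∀ a, A a b → a ∈ C) :
    ∀ l : List V, l.Chain' A → (∃ w ∈ l, w ∈ C) → ∀ u, l.head? = some u → u ∈ C := by
  intro l
  induction l with
  | nil => rintro _ ⟨w, hw, _⟩ u hu; simp at hw
  | cons a t ih =>
    rintro hch ⟨w, hw, hwC⟩ u hu
    simp only [List.head?_cons, Option.some.injEq] at hu
    subst hu
    rcases List.mem_cons.mp hw with h | hw
    · exact h ▸ hwC
    cases t with
    | nil => simp at hw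
    | cons b t' =>
      simp only [List.Chain', List.isChain_cons_cons] at hch
      have hb : b ∈ C := ih hch.2 ⟨w, hw, hwC⟩ b rfl
      exact hcl _ hb _ hch.1

lemma compl_key_stmt4 (hC : IsSourceComponent A C ∨ IsSinkComponent A C)
    {I : V → V → Set V}
    (hI : I = geoInterval A ∨ I = p3Interval A ∨ I = p3sInterval A) :
    ∀ u v : V, u ∉ C → v ∉ C → ∀ w ∈ I u v, w ∉ C := by
  intro u v hu hv w hw hwC
  rcases hC with ⟨_, hsrc⟩ | ⟨_, hsink⟩
  · -- source component: backwards closure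
    have hcl : ∀ b ∈ C, ∀ a, A a b → a ∈ C := fun b hb a hab =>
      by_contra fun ha => hsrc b hb a ha hab
    rcases hI with rfl | rfl | rfl
    · simp only [geoInterval, Set.mem_union, Set.mem_insert_iff,
        Set.mem_singleton_iff, Set.mem_setOf_eq] at hw
      rcases hw with (rfl | rfl) | ⟨l, ⟨⟨hh, _, hch⟩, _⟩, hmem⟩ | ⟨l, ⟨⟨hh, _, hch⟩, _⟩, hmem⟩
      · exact hu hwC
      · exact hv hwC
      · exact hu (head_mem_of_closed' hcl l hch ⟨w, hmem, hwC⟩ u hh)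
      · exact hv (head_mem_of_closed' hcl l hch ⟨w, hmem, hwC⟩ v hh)
    · simp only [p3Interval, Set.mem_union, Set.mem_insert_iff,
        Set.mem_singleton_iff, Set.mem_setOf_eq] at hw
      rcases hw with (rfl | rfl) | ⟨huw, _⟩ | ⟨hvw, _⟩
      · exact hu hwC
      · exact hv hwC
      · exact hu (hcl w hwC u huw)
      · exact hv (hcl w hwC v hvw)
    · simp only [p3sInterval, Set.mem_union, Set.mem_insert_iff,
        Set.mem_singleton_iff, Set.mem_setOf_eq] at hw
      rcases hw with (rfl | rfl) | ⟨huw, _, _⟩ | ⟨hvw, _, _⟩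
      · exact hu hwC
      · exact hv hwC
      · exact hu (hcl w hwC u huw)
      · exact hv (hcl w hwC v hvw)
  · -- sink component: forwards closure
    have hcl : ∀ a ∈ C, ∀ b, A a b → b ∈ C := fun a ha b hab =>
      by_contra fun hb => hsink a ha b hb hab
    rcases hI with rfl | rfl | rfl
    · simp only [geoInterval, Set.mem_union, Set.mem_insert_iff,
        Set.mem_singleton_iff, Set.mem_setOf_eq] at hw
      rcases hw with (rfl | rfl) | ⟨l, ⟨⟨_, hl, hch⟩, _⟩, hmem⟩ | ⟨l, ⟨⟨_, hl, hch⟩, _⟩, hmem⟩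
      · exact hu hwC
      · exact hv hwC
      · exact hv (last_mem_of_closed' hcl l hch ⟨w, hmem, hwC⟩ v hl)
      · exact hu (last_mem_of_closed' hcl l hch ⟨w, hmem, hwC⟩ u hl)
    · simp only [p3Interval, Set.mem_union, Set.mem_insert_iff,
        Set.mem_singleton_iff, Set.mem_setOf_eq] at hw
      rcases hw with (rfl | rfl) | ⟨_, hwv⟩ | ⟨_, hwu⟩
      · exact hu hwC
      · exact hv hwC
      · exact hv (hcl w hwC v hwv)
      · exact hu (hcl w hwC u hwu)
    · simp only [p3sInterval, Set.mem_union, Set.mem_insert_iff,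
        Set.mem_singleton_iff, Set.mem_setOf_eq] at hw
      rcases hw with (rfl | rfl) | ⟨_, hwv, _⟩ | ⟨_, hwu, _⟩
      · exact hu hwC
      · exact hv hwC
      · exact hv (hcl w hwC v hwv)
      · exact hu (hcl w hwC u hwu)

end AuxStmt4

/-- If `C` is a source or a sink strong component of an oriented
graph `D`, then every interval set and every hull set of `D` in the geodetic,
P3 and P3* convexities contains a vertex of `C`. -/
theorem stmt_4 {V : Type*} [Finite V] (A : V → V → Prop) (hA : IsOriented A)
    (C : Set V) (hC : IsSourceComponent A C ∨ IsSinkComponent A C)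
    (I : V → V → Set V)
    (hI : I = geoInterval A ∨ I = p3Interval A ∨ I = p3sInterval A) :
    ∀ S : Set V,
      (IsIntervalSet I S → ∃ x ∈ S, x ∈ C) ∧
      (IsHullSet I S → ∃ x ∈ S, x ∈ C) := by
  -- C is nonempty
  have hSC : IsStrongComponent A C := by rcases hC with ⟨h, _⟩ | ⟨h, _⟩ <;> exact h
  obtain ⟨v₀, hCeq⟩ := hSC
  have hreach : Reach A v₀ v₀ := ⟨[v₀], by simp [DiWalk, List.Chain']⟩
  have hv₀ : v₀ ∈ C := by rw [hCeq]; exact ⟨hreach, hreach⟩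
  have hkey := compl_key_stmt4 hC hI
  intro S
  constructor
  · intro hS
    by_contra hcon; push_neg at hcon
    have hmem : v₀ ∈ ⋃ u ∈ S, ⋃ v ∈ S, I u v := by rw [hS]; trivial
    simp only [Set.mem_iUnion] at hmem
    obtain ⟨u, hu, v, hv, hm⟩ := hmem
    exact hkey u v (hcon u hu) (hcon v hv) v₀ hm hv₀
  · intro hS
    by_contra hcon; push_neg at hcon
    have hconv : IsConvexSet I Cᶜ := fun u hu v hv w hw => hkey u v hu hv w hw
    have hsub : convexHullD I S ⊆ Cᶜ :=
      Set.sInter_subset_of_mem ⟨hconv, fun x hx => hcon x hx⟩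
    rw [hS] at hsub
    exact hsub (Set.mem_univ v₀) hv₀
end

section
/- If D is a strongly connected oriented graph with at least two vertices, then the hull number of D in the geodetic convexity satisfies hn_g(D) ≤ m(D) − n(D) + 2, where n(D) is the number of vertices and m(D) is the number of arcs of D. -/
/-! ### Auxiliary machinery: shortest-walk distance and BFS in-tree toward a root. -/

section AuxHull

variable {V : Type*}

lemma diwalk_ne_nil {A : V → V → Prop} {u v : V} {l : List V} (h : DiWalk A u v l) :
    l ≠ [] := by
  rcases h with ⟨h1, -, -⟩
  intro hl; rw [hl] at h1; simp at h1

lemma diwalk_single {A : V → V → Prop} {u v x : V} (h : DiWalk A u v [x]) : u = v := by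
  rcases h with ⟨h1, h2, -⟩
  simp at h1 h2
  exact h1.symm.trans h2

lemma diwalk_cons {A : V → V → Prop} {p v u : V} {l : List V}
    (ha : A u p) (h : DiWalk A p v l) : DiWalk A u v (u :: l) := by
  obtain ⟨h1, h2, h3⟩ := h
  refine ⟨rfl, ?_, ?_⟩
  · cases l with
    | nil => simp at h1
    | cons b t => rw [List.getLast?_cons_cons]; exact h2
  · refine List.isChain_cons.mpr ⟨fun y hy => ?_, h3⟩
    rw [h1] at hy; simp at hy; subst hy; exact ha

lemma diwalk_cons_inv {A : V → V → Prop} {u v x : V} {l : List V}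
    (h : DiWalk A u v (x :: l)) (hl : l ≠ []) :
    x = u ∧ ∃ p, l.head? = some p ∧ A u p ∧ DiWalk A p v l := by
  obtain ⟨h1, h2, h3⟩ := h
  simp at h1
  obtain ⟨hc1, hc2⟩ := List.isChain_cons.mp h3
  cases l with
  | nil => exact absurd rfl hl
  | cons b t =>
    refine ⟨h1, b, rfl, ?_, rfl, ?_, hc2⟩
    · have := hc1 b rfl; rwa [h1] at this
    · rw [List.getLast?_cons_cons] at h2; exact h2

/-- Length (number of vertices) of a shortest directed `(u,v)`-walk. -/
noncomputable def ddist (A : V → V → Prop) (u v : V) : ℕ :=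
  sInf {k | ∃ l, DiWalk A u v l ∧ l.length = k}

lemma ddist_exists {A : V → V → Prop} {u v : V} (h : Reach A u v) :
    ∃ l, DiWalk A u v l ∧ l.length = ddist A u v := by
  obtain ⟨l, hl⟩ := h
  exact Nat.sInf_mem (⟨l.length, l, hl, rfl⟩ :
    Set.Nonempty {k | ∃ l, DiWalk A u v l ∧ l.length = k})

lemma ddist_le {A : V → V → Prop} {u v : V} {l : List V} (h : DiWalk A u v l) :
    ddist A u v ≤ l.length := Nat.sInf_le ⟨l, h, rfl⟩

lemma ddist_pos {A : V → V → Prop} {u v : V} (h : Reach A u v) : 1 ≤ ddist A u v := by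
  obtain ⟨l, hl, hlen⟩ := ddist_exists h
  have h1 : 0 < l.length := List.length_pos_iff.mpr (diwalk_ne_nil hl)
  omega

lemma ddist_eq_one {A : V → V → Prop} {u v : V} (h : Reach A u v)
    (h1 : ddist A u v = 1) : u = v := by
  obtain ⟨l, hl, hlen⟩ := ddist_exists h
  rw [h1] at hlen
  match l, hlen with
  | [x], _ => exact diwalk_single hl

lemma ddist_self {A : V → V → Prop} (v : V) : ddist A v v = 1 := by
  have h1 : DiWalk A v v [v] := ⟨rfl, rfl, List.isChain_singleton v⟩
  have h2 := ddist_le h1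
  have h3 := ddist_pos ⟨[v], h1⟩
  simp at h2
  omega

/-- Existence of a "parent" step decreasing the distance to `r` by exactly one. -/
lemma parent_exists {A : V → V → Prop} (hsc : StronglyConnected A) (r : V)
    {v : V} (hv : v ≠ r) : ∃ p, A v p ∧ ddist A p r + 1 = ddist A v r := by
  obtain ⟨l, hl, hlen⟩ := ddist_exists (hsc v r)
  have hne := diwalk_ne_nil hl
  match l, hl, hlen with
  | [x], hl, hlen => exact absurd (diwalk_single hl) hv
  | x :: y :: t, hl, hlen =>
    obtain ⟨hxu, p, hp, hap, hw⟩ := diwalk_cons_inv hl (by simp)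
    simp only [List.head?_cons, Option.some.injEq] at hp
    subst hp
    refine ⟨y, hap, ?_⟩
    have h1 : ddist A y r ≤ (y :: t).length := ddist_le hw
    have h2 : ddist A v r ≤ ddist A y r + 1 := by
      obtain ⟨lp, hlp, hlplen⟩ := ddist_exists (hsc y r)
      have := ddist_le (diwalk_cons hap hlp)
      simp at this
      omega
    simp at h1 hlen
    omega

/-- The path following iterates of a "parent" function. -/
def treePath (f : V → V) : ℕ → V → List V
  | 0, v => [v]
  | k + 1, v => v :: treePath f k (f v)

lemma exists_in_arc {A : V → V → Prop} : ∀ (l : List V) (v : V), l.Chain' A →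
    l.getLast? = some v → 2 ≤ l.length → ∃ a, A a v := by
  intro l
  induction l with
  | nil => intro v _ hlast _; simp at hlast
  | cons x t ih =>
    intro v hc hlast hlen
    cases t with
    | nil => simp at hlen
    | cons y s =>
      cases s with
      | nil =>
        simp at hlast
        subst hlast
        exact ⟨x, (List.isChain_cons_cons.mp hc).1⟩
      | cons z w =>
        refine ih v hc.tail ?_ (by simp)
        rw [List.getLast?_cons_cons] at hlast
        exact hlast

lemma treePath_head (f : V → V) (k : ℕ) (v : V) : v ∈ treePath f k v := by
  cases k <;> simp [treePath]

end AuxHull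

/-- For a strongly connected oriented graph with at least two
vertices, `hn_g(D) ≤ m(D) - n(D) + 2`. -/
theorem stmt_5 {V : Type*} [Finite V] (A : V → V → Prop) (hA : IsOriented A)
    (hsc : StronglyConnected A) (h2 : 2 ≤ Nat.card V) :
    (hullNumber (geoInterval A) : ℤ) ≤
      (arcCount A : ℤ) - (Nat.card V : ℤ) + 2 := by
  classical
  have hneV : Nonempty V := (Nat.card_pos_iff.mp (by omega)).1
  obtain ⟨r⟩ := hneV
  have hpar : ∀ v, v ≠ r → ∃ p, A v p ∧ ddist A p r + 1 = ddist A v r :=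
    fun v hv => parent_exists hsc r hv
  choose! par hparA hparD using hpar
  -- tree paths are geodesics of the right length
  have tp_walk : ∀ k v, ddist A v r = k + 1 →
      DiWalk A v r (treePath par k v) ∧ (treePath par k v).length = k + 1 := by
    intro k
    induction k with
    | zero =>
      intro v hv
      have hvr : v = r := ddist_eq_one (hsc v r) hv
      subst hvr
      exact ⟨⟨rfl, rfl, List.isChain_singleton v⟩, rfl⟩
    | succ k ih =>
      intro v hv
      have hvr : v ≠ r := by
        intro h; subst h; rw [ddist_self] at hv; omega
      have hd : ddist A (par v) r = k + 1 := by have := hparD v hvr; omega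
      obtain ⟨hw, hlen⟩ := ih (par v) hd
      exact ⟨diwalk_cons (hparA v hvr) hw, by simp [treePath, hlen]⟩
  -- tree paths are closed under parent, away from r
  have tp_closed : ∀ k v, ddist A v r = k + 1 →
      ∀ x ∈ treePath par k v, x ≠ r → par x ∈ treePath par k v := by
    intro k
    induction k with
    | zero =>
      intro v hv x hx hxr
      have hvr : v = r := ddist_eq_one (hsc v r) hv
      subst hvr
      simp [treePath] at hx
      exact absurd hx hxr
    | succ k ih =>
      intro v hv x hx hxr
      have hvr : v ≠ r := by
        intro h; subst h; rw [ddist_self] at hv; omega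
      have hd : ddist A (par v) r = k + 1 := by have := hparD v hvr; omega
      simp only [treePath, List.mem_cons] at hx ⊢
      rcases hx with rfl | hx
      · exact Or.inr (treePath_head par k (par x))
      · exact Or.inr (ih (par v) hd x hx hxr)
  set L : Set V := {w | ∀ x, x ≠ r → par x ≠ w} with hL
  have hleafcase : ∀ u, u ∈ L → ∃ w ∈ L, ∃ k, ddist A w r = k + 1 ∧ u ∈ treePath par k w := by
    intro u hu
    refine ⟨u, hu, ddist A u r - 1, ?_, treePath_head _ _ _⟩
    have := ddist_pos (hsc u r); omega
  -- climbing the tree: every vertex lies on a tree path from a leaf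
  have climb : ∀ N u, ({y | ddist A u r < ddist A y r}).ncard ≤ N →
      ∃ w ∈ L, ∃ k, ddist A w r = k + 1 ∧ u ∈ treePath par k w := by
    intro N
    induction N with
    | zero =>
      intro u hN
      by_cases hu : u ∈ L
      · exact hleafcase u hu
      · exfalso
        simp only [hL, Set.mem_setOf_eq] at hu
        push_neg at hu
        obtain ⟨x, hxr, hx⟩ := hu
        have hdx : ddist A x r = ddist A u r + 1 := by
          have := hparD x hxr; rw [hx] at this; omega
        have hxmem : x ∈ {y | ddist A u r < ddist A y r} := by simp [hdx]
        have := (Set.ncard_pos (Set.toFinite _)).mpr ⟨x, hxmem⟩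
        omega
    | succ N ih =>
      intro u hN
      by_cases hu : u ∈ L
      · exact hleafcase u hu
      · simp only [hL, Set.mem_setOf_eq] at hu
        push_neg at hu
        obtain ⟨x, hxr, hx⟩ := hu
        have hdx : ddist A x r = ddist A u r + 1 := by
          have := hparD x hxr; rw [hx] at this; omega
        have hss : {y | ddist A x r < ddist A y r} ⊂ {y | ddist A u r < ddist A y r} := by
          refine ⟨fun y hy => ?_, fun hsub => ?_⟩
          · simp only [Set.mem_setOf_eq] at hy ⊢; omega
          · have := hsub (show x ∈ _ by simp [hdx])
            simp only [Set.mem_setOf_eq] at this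
            omega
        have hlt := Set.ncard_lt_ncard hss (Set.toFinite _)
        obtain ⟨w, hwL, k, hk, hmem⟩ := ih x (by omega)
        refine ⟨w, hwL, k, hk, ?_⟩
        rw [← hx]
        exact tp_closed k w hk x hmem hxr
  set S : Set V := insert r L with hS
  -- S is a hull set
  have hHull : IsHullSet (geoInterval A) S := by
    unfold IsHullSet
    apply Set.eq_univ_of_forall
    intro v
    rw [convexHullD, Set.mem_sInter]
    rintro C ⟨hconv, hsub⟩
    obtain ⟨w, hwL, k, hk, hmem⟩ := climb _ v le_rfl
    have hgeo : IsGeodesic A w r (treePath par k w) := by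
      obtain ⟨hw1, hw2⟩ := tp_walk k w hk
      refine ⟨hw1, fun l' hl' => ?_⟩
      have := ddist_le hl'
      omega
    refine hconv w (hsub (Set.mem_insert_of_mem _ hwL)) r (hsub (Set.mem_insert r L)) ?_
    exact Set.mem_union_right _ (Or.inl ⟨treePath par k w, hgeo, hmem⟩)
  have hHN : hullNumber (geoInterval A) ≤ S.ncard := Nat.sInf_le ⟨S, hHull, rfl⟩
  -- every non-root vertex has an in-arc
  have hin : ∀ w, w ≠ r → ∃ a, A a w := by
    intro w hw
    obtain ⟨l, hl⟩ := hsc r w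
    cases l with
    | nil => exact absurd rfl (diwalk_ne_nil hl)
    | cons a t =>
      cases t with
      | nil => exact absurd (diwalk_single hl) (Ne.symm hw)
      | cons b t' => exact exists_in_arc _ w hl.2.2 hl.2.1 (by simp)
  choose! g hg using hin
  set AS : Set (V × V) := {p | A p.1 p.2} with hAS
  have hm : arcCount A = AS.ncard := by
    rw [← Nat.card_coe_set_eq]
    rfl
  set T1 : Set (V × V) := (fun u => (u, par u)) '' {r}ᶜ with hT1
  set T2 : Set (V × V) := (fun w => (g w, w)) '' (L \ {r}) with hT2
  have hT1sub : T1 ⊆ AS := by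
    rintro _ ⟨u, hu, rfl⟩
    exact hparA u hu
  have hT2sub : T2 ⊆ AS := by
    rintro _ ⟨w, hw, rfl⟩
    exact hg w hw.2
  have hdis : Disjoint T1 T2 := by
    rw [Set.disjoint_left]
    rintro _ ⟨u, hu, rfl⟩ ⟨w, hw, heq⟩
    have h2 : w = par u := congrArg Prod.snd heq
    exact hw.1 u hu h2.symm
  have hc1 : T1.ncard = ({r}ᶜ : Set V).ncard :=
    Set.ncard_image_of_injective _ (fun a b h => congrArg Prod.fst h)
  have hc2 : T2.ncard = (L \ {r}).ncard :=
    Set.ncard_image_of_injective _ (fun a b h => congrArg Prod.snd h)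
  have hcu : T1.ncard + T2.ncard ≤ AS.ncard := by
    rw [← Set.ncard_union_eq hdis (Set.toFinite _) (Set.toFinite _)]
    exact Set.ncard_le_ncard (Set.union_subset hT1sub hT2sub) (Set.toFinite _)
  have hcompl : 1 + ({r}ᶜ : Set V).ncard = Nat.card V := by
    have h := Set.ncard_add_ncard_compl ({r} : Set V)
    rwa [Set.ncard_singleton] at h
  have hSc : S.ncard ≤ (L \ {r}).ncard + 1 := by
    have hSE : S = insert r (L \ {r}) := by
      rw [hS]; ext x; simp
    rw [hSE]
    exact Set.ncard_insert_le _ _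
  rw [hm]
  rw [hc1, hc2] at hcu
  omega
end

section
/- Let D be an oriented graph and let P = (u, w_1, …, w_q, v) with q ≥ 1 be a directed (u,v)-path in D that is not a shortest directed (u,v)-path, such that every internal vertex w_i (1 ≤ i ≤ q) has in-degree 1 and out-degree 1 in D. Then every hull set of D in the geodetic convexity contains at least one internal vertex of P; in particular, the set W = {w_1, …, w_q} is coconvex (its complement is convex) in the geodetic convexity. -/
/-- Forward propagation: a chain that hits `ws[i]` and does not end inside `ws`
must continue along the path up to `v`. -/
lemma fwd_aux {V : Type*} (A : V → V → Prop) (u v b : V) (ws : List V)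
    (hchain : (u :: (ws ++ [v])).Chain' A)
    (hout : ∀ w ∈ ws, ∃! y, A w y)
    (hb : b ∉ ws) :
    ∀ (l2 : List V) (i : ℕ) (hi : i < ws.length),
      (ws[i] :: l2).Chain' A → (ws[i] :: l2).getLast? = some b →
      (ws ++ [v]).drop i <+: ws[i] :: l2 := by
  have harc : ∀ (i : ℕ) (hi : i < ws.length),
      A ws[i] ((ws ++ [v])[i+1]'(by simp; omega)) := by
    intro i hi
    have h := List.isChain_iff_getElem.mp hchain (i+1) (by simp; omega)
    simp only [List.get_eq_getElem, List.getElem_cons_succ] at h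
    rwa [List.getElem_append_left hi] at h
  intro l2
  induction l2 with
  | nil =>
    intro i hi _ hlast
    exfalso
    apply hb
    have hwb : ws[i] = b := by simpa using hlast
    exact hwb ▸ List.getElem_mem hi
  | cons y l2' ih =>
    intro i hi hc hlast
    obtain ⟨hy, hc'⟩ := List.isChain_cons_cons.mp hc
    have hyeq : y = (ws ++ [v])[i+1]'(by simp; omega) := by
      obtain ⟨z, hz, huniq⟩ := hout ws[i] (List.getElem_mem hi)
      rw [huniq y hy, huniq _ (harc i hi)]
    have hlast' : (y :: l2').getLast? = some b := by
      rw [List.getLast?_cons_cons] at hlast; exact hlast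
    by_cases hi1 : i + 1 < ws.length
    · have hyw : y = ws[i+1] := by rw [hyeq, List.getElem_append_left hi1]
      subst hyw
      have hpre := ih (i+1) hi1 hc' hlast'
      rw [List.drop_eq_getElem_cons (by simp; omega : i < (ws ++ [v]).length),
        List.getElem_append_left hi]
      obtain ⟨t, ht⟩ := hpre
      exact ⟨t, by rw [List.cons_append, ht]⟩
    · have hieq : i + 1 = ws.length := by omega
      have hyv : y = v := by
        rw [hyeq, List.getElem_append_right (by omega)]
        simp [hieq]
      have hdrop : (ws ++ [v]).drop i = [ws[i], v] := by
        rw [List.drop_append_of_le_length (by omega), List.drop_eq_getElem_cons hi,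
          List.drop_eq_nil_of_le (by omega)]
        rfl
      rw [hdrop, hyv]
      exact ⟨l2', rfl⟩

/-- Key lemma: any walk between endpoints outside `ws` that meets `ws`
contains the whole path `u :: ws ++ [v]` as a contiguous infix. -/
lemma key_infix {V : Type*} (A : V → V → Prop) (u v : V) (ws : List V)
    (hchain : (u :: (ws ++ [v])).Chain' A)
    (hdeg : ∀ w ∈ ws, (∃! x, A x w) ∧ (∃! y, A w y))
    {a b : V} {l : List V} (hl : DiWalk A a b l) (ha : a ∉ ws) (hb : b ∉ ws)
    {w : V} (hw : w ∈ ws) (hwl : w ∈ l) :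
    (u :: (ws ++ [v])) <:+: l := by
  obtain ⟨i, hi, hwi⟩ := List.mem_iff_getElem.mp hw
  obtain ⟨k, hk, hwk⟩ := List.mem_iff_getElem.mp hwl
  obtain ⟨hhead, hlast, hchl⟩ := hl
  -- forward part
  have hconsdrop : l.drop k = ws[i] :: l.drop (k+1) := by
    rw [List.drop_eq_getElem_cons hk, hwk, hwi]
  have hcdrop : (ws[i] :: l.drop (k+1)).Chain' A := by
    rw [← hconsdrop]; exact hchl.suffix (List.drop_suffix k l)
  have hdropne : l.drop k ≠ [] := by rw [hconsdrop]; simp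
  have hlastdrop : (ws[i] :: l.drop (k+1)).getLast? = some b := by
    rw [← hconsdrop, ← hlast]
    conv_rhs => rw [← List.take_append_drop k l]
    rw [List.getLast?_append, List.getLast?_eq_getLast hdropne]
    simp
  have hpre : (ws ++ [v]).drop i <+: ws[i] :: l.drop (k+1) :=
    fwd_aux A u v b ws hchain (fun w hw => (hdeg w hw).2) hb _ i hi hcdrop hlastdrop
  -- backward part, via reversal
  have hchainrev : (v :: (ws.reverse ++ [u])).Chain' (flip A) := by
    have h := List.isChain_reverse.mpr
      (show (u :: (ws ++ [v])).Chain' (flip (flip A)) from hchain)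
    simp at h; exact h
  have hj : ws.length - 1 - i < ws.reverse.length := by simp; omega
  have hwj : ws.reverse[ws.length - 1 - i]'hj = w := by
    rw [List.getElem_reverse]
    rw [← hwi]
    congr 1
    omega
  have htake : l.take (k+1) = l.take k ++ [w] := by
    rw [← List.take_concat_get' l k hk, hwk]
  have hrev : (l.take (k+1)).reverse = w :: (l.take k).reverse := by
    rw [htake]; simp
  have hcrev : (ws.reverse[ws.length - 1 - i]'hj :: (l.take k).reverse).Chain' (flip A) := by
    rw [hwj, ← hrev]
    exact List.isChain_reverse.mpr
      (show (l.take (k+1)).Chain' (flip (flip A)) from hchl.prefix (List.take_prefix _ l))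
  have htakene : l.take (k+1) ≠ [] := by rw [htake]; simp
  have hlastrev : (ws.reverse[ws.length - 1 - i]'hj :: (l.take k).reverse).getLast? = some a := by
    rw [hwj, ← hrev, List.getLast?_reverse, ← hhead]
    conv_rhs => rw [← List.take_append_drop (k+1) l]
    rw [List.head?_append, List.head?_eq_head htakene]
    simp
  have ha' : a ∉ ws.reverse := by simpa using ha
  have hpre2 : (ws.reverse ++ [u]).drop (ws.length - 1 - i) <+:
      ws.reverse[ws.length - 1 - i]'hj :: (l.take k).reverse :=
    fwd_aux (flip A) v u a ws.reverse hchainrev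
      (fun x hx => (hdeg x (by simpa using hx)).1) ha' _ _ hj hcrev hlastrev
  have hQ : (ws.reverse ++ [u]).drop (ws.length - 1 - i) = ((u :: ws).take (i+2)).reverse := by
    have h1 : ws.reverse ++ [u] = (u :: ws).reverse := by simp
    rw [h1, List.reverse_take]
    congr 1
    simp; omega
  rw [hQ, hwj, ← hrev] at hpre2
  have hsuf2 : (u :: ws).take (i+2) <:+ l.take (k+1) := List.reverse_prefix.mp hpre2
  have htake2 : (u :: ws).take (i+2) = u :: (ws.take i ++ [w]) := by
    rw [List.take_succ_cons, ← List.take_concat_get' ws i hi, hwi]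
  obtain ⟨t1, ht1⟩ := hsuf2
  rw [htake2, htake] at ht1
  have ht1' : t1 ++ (u :: ws.take i) = l.take k := by
    apply List.append_cancel_right (bs := [w])
    rw [← ht1]
    simp [List.append_assoc]
  obtain ⟨t2, ht2⟩ := hpre
  rw [List.drop_append_of_le_length (le_of_lt hi)] at ht2
  have hdropws : ws.drop i = w :: ws.drop (i+1) := by
    rw [List.drop_eq_getElem_cons hi, hwi]
  rw [hdropws] at ht2
  have ht2' : l.drop (k+1) = ws.drop (i+1) ++ v :: t2 := by
    have h := ht2
    rw [hwi] at h
    simp only [List.cons_append, List.append_assoc, List.singleton_append] at h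
    exact (List.cons.inj h).2.symm
  have hws : ws = ws.take i ++ (w :: ws.drop (i+1)) := by
    conv_lhs => rw [← List.take_append_drop i ws]
    rw [hdropws]
  refine ⟨t1, t2, ?_⟩
  have hl' : l = l.take k ++ (w :: l.drop (k+1)) := by
    conv_lhs => rw [← List.take_append_drop k l]
    rw [List.drop_eq_getElem_cons hk, hwk]
  rw [hl', ← ht1', ht2']
  conv_lhs => rw [hws]
  simp only [List.cons_append, List.append_assoc, List.singleton_append, List.nil_append]

/-- If `P = (u, w_1, …, w_q, v)` (`q ≥ 1`) is a directed `(u,v)`-path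
that is not a shortest directed `(u,v)`-path and every internal vertex has
in-degree 1 and out-degree 1, then every geodetic hull set contains an internal
vertex of `P`; in particular, the set of internal vertices is coconvex. -/
theorem stmt_6 {V : Type*} [Finite V] (A : V → V → Prop) (hA : IsOriented A)
    (u v : V) (ws : List V) (hq : ws ≠ [])
    (hwalk : DiWalk A u v (u :: (ws ++ [v])))
    (hnodup : (u :: (ws ++ [v])).Nodup)
    (hnotshort : ¬ IsGeodesic A u v (u :: (ws ++ [v])))
    (hdeg : ∀ w ∈ ws, (∃! x, A x w) ∧ (∃! y, A w y)) :
    (∀ S : Set V, IsHullSet (geoInterval A) S → ∃ w ∈ ws, w ∈ S) ∧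
    IsConvexSet (geoInterval A) {x | x ∉ ws} := by
  obtain ⟨hwh, hwl, hwc⟩ := hwalk
  -- there is a shorter (u,v)-walk
  obtain ⟨l0, hl0, hlen0⟩ : ∃ l0, DiWalk A u v l0 ∧ l0.length < (u :: (ws ++ [v])).length := by
    by_contra hcon
    push_neg at hcon
    exact hnotshort ⟨⟨hwh, hwl, hwc⟩, hcon⟩
  -- no geodesic between endpoints outside ws meets ws
  have hmain : ∀ a b : V, a ∉ ws → b ∉ ws → ∀ l, IsGeodesic A a b l → ∀ x ∈ ws, x ∉ l := by
    intro a b ha hb l hgeo x hxws hxl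
    obtain ⟨hdw, hmin⟩ := hgeo
    obtain ⟨t1, t2, hsplit⟩ := key_infix A u v ws hwc hdeg hdw ha hb hxws hxl
    obtain ⟨hha, hlb, hcl⟩ := hdw
    obtain ⟨hh0, hl0last, hc0⟩ := hl0
    rw [← hsplit] at hha hlb hcl
    rw [List.append_assoc] at hha hlb hcl
    have hPl : (u :: (ws ++ [v])).getLast? = some v := by
      rw [show u :: (ws ++ [v]) = (u :: ws) ++ [v] from rfl, List.getLast?_append]
      simp
    obtain ⟨c1, c23, j1⟩ := List.isChain_append.mp hcl
    obtain ⟨_, c3, j2⟩ := List.isChain_append.mp c23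
    have hcL : (t1 ++ (l0 ++ t2)).Chain' A := by
      refine List.isChain_append.mpr ⟨c1, List.isChain_append.mpr ⟨hc0, c3, ?_⟩, ?_⟩
      · intro x hx y hy
        rw [hl0last] at hx
        have hxv : x = v := by
          have := hx
          simp only [Option.mem_def, Option.some.injEq] at this
          exact this.symm
        rw [hxv]
        exact j2 v (by rw [hPl]; rfl) y hy
      · intro x hx y hy
        have hyu : y = u := by
          rw [List.head?_append, hh0] at hy; rw [show (some u).or t2.head? = some u from rfl] at hy
          simp only [Option.mem_def, Option.some.injEq] at hy
          exact hy.symm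
        rw [hyu]
        exact j1 x hx u (by simp [List.head?_append])
    have hLh : (t1 ++ (l0 ++ t2)).head? = some a := by
      rw [← hha]
      simp only [List.head?_append, hh0, List.head?_cons]
    have hLl : (t1 ++ (l0 ++ t2)).getLast? = some b := by
      rw [← hlb]
      simp only [List.getLast?_append]
      rw [hl0last, hPl]
    have hle := hmin _ ⟨hLh, hLl, hcL⟩
    rw [← hsplit] at hle
    simp only [List.length_append, List.length_cons] at hle hlen0
    omega
  have hconv : IsConvexSet (geoInterval A) {x | x ∉ ws} := by
    intro a ha b hb x hx
    simp only [Set.mem_setOf_eq] at ha hb ⊢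
    simp only [geoInterval, Set.mem_union, Set.mem_insert_iff, Set.mem_singleton_iff,
      Set.mem_setOf_eq] at hx
    rcases hx with (rfl | rfl) | (⟨l, hgeo, hxl⟩ | ⟨l, hgeo, hxl⟩)
    · exact ha
    · exact hb
    · intro hxws; exact hmain a b ha hb l hgeo x hxws hxl
    · intro hxws; exact hmain b a hb ha l hgeo x hxws hxl
  refine ⟨?_, hconv⟩
  intro S hS
  by_contra hno
  push_neg at hno
  have hsub : S ⊆ {x | x ∉ ws} := fun x hx hxws => hno x hxws hx
  obtain ⟨w0, hw0⟩ := List.exists_mem_of_ne_nil ws hq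
  have hw0' : w0 ∈ convexHullD (geoInterval A) S := by rw [hS]; trivial
  exact (Set.mem_sInter.mp hw0' _ ⟨hconv, hsub⟩) hw0
end

section
/- If T is a strongly connected tournament with at least two vertices, then the hull number of T equals 2 both in the P3* convexity and in the geodetic convexity: hn_{P3*}(T) = hn_g(T) = 2. -/
section Aux
variable {V : Type*}

lemma subset_hullD (I : V → V → Set V) (S : Set V) : S ⊆ convexHullD I S := by
  intro x hx C hC
  exact hC.2 hx

lemma hullD_subset {I : V → V → Set V} {S C : Set V} (hC : IsConvexSet I C) (hS : S ⊆ C) :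
    convexHullD I S ⊆ C :=
  Set.sInter_subset_of_mem ⟨hC, hS⟩

lemma hullD_convex (I : V → V → Set V) (S : Set V) : IsConvexSet I (convexHullD I S) := by
  intro u hu v hv w hw C hC
  exact hC.1 u (hu C hC) v (hv C hC) hw

/-- arcs restricted to a set -/
def resA (A : V → V → Prop) (S : Set V) : V → V → Prop :=
  fun a b => a ∈ S ∧ b ∈ S ∧ A a b

lemma cross {R : V → V → Prop} {u v : V} (h : Relation.ReflTransGen R u v)
    (X : Set V) (hu : u ∈ X) (hv : v ∉ X) : ∃ a ∈ X, ∃ b, b ∉ X ∧ R a b := by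
  revert hu
  induction h using Relation.ReflTransGen.head_induction_on with
  | refl => exact fun hu => absurd hu hv
  | head hab hrest ih =>
    intro hu
    rename_i a c
    by_cases hc : c ∈ X
    · exact ih hc
    · exact ⟨a, hu, c, hc, hab⟩

/-- In a strong set, there is an arc across any nontrivial partition. -/
lemma exists_cross {A : V → V → Prop} {S X : Set V}
    (hstrong : ∀ u ∈ S, ∀ v ∈ S, Relation.ReflTransGen (resA A S) u v)
    (hXS : X ⊆ S) (hX : X.Nonempty) (hSX : (S \ X).Nonempty) :
    ∃ a ∈ X, ∃ b ∈ S \ X, A a b := by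
  obtain ⟨x, hx⟩ := hX
  obtain ⟨y, hy⟩ := hSX
  obtain ⟨a, ha, b, hb, hres⟩ := cross (hstrong x (hXS hx) y hy.1) X hx hy.2
  exact ⟨a, ha, b, ⟨hres.2.1, hb⟩, hres.2.2⟩

end Aux
section Aux2
variable {V : Type*} [Finite V]

lemma diff_singleton_nonempty {S : Set V} {v : V} (h2 : 2 ≤ S.ncard) :
    (S \ {v}).Nonempty := by
  rw [Set.nonempty_iff_ne_empty]
  intro h
  have hsub : S ⊆ {v} := Set.diff_eq_empty.mp h
  have := Set.ncard_le_ncard hsub (Set.toFinite _)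
  rw [Set.ncard_singleton] at this
  omega

lemma triangle_through {A : V → V → Prop} (hT : IsTournament A) {S : Set V}
    (hstrong : ∀ u ∈ S, ∀ v ∈ S, Relation.ReflTransGen (resA A S) u v)
    {v : V} (hv : v ∈ S) (h2 : 2 ≤ S.ncard) :
    ∃ a b, a ∈ S ∧ b ∈ S ∧ A v a ∧ A a b ∧ A b v := by
  have hSv : (S \ {v}).Nonempty := diff_singleton_nonempty h2
  -- an out-neighbour of v
  have hout : ∃ b, b ∈ S ∧ b ≠ v ∧ A v b := by
    obtain ⟨a0, ha0, b0, hb0, hab0⟩ :=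
      exists_cross hstrong (Set.singleton_subset_iff.mpr hv) ⟨v, rfl⟩ hSv
    rw [Set.mem_singleton_iff] at ha0
    exact ⟨b0, hb0.1, fun h => hb0.2 (by simp [h]), ha0 ▸ hab0⟩
  -- an in-neighbour of v
  have hXS : S \ {v} ⊆ S := Set.diff_subset
  have h1 : (S \ (S \ {v})).Nonempty := by
    rw [Set.diff_diff_cancel_left (Set.singleton_subset_iff.mpr hv)]
    exact ⟨v, rfl⟩
  have hin : ∃ a, a ∈ S ∧ a ≠ v ∧ A a v := by
    obtain ⟨a1, ha1, b1, hb1, hab1⟩ := exists_cross hstrong hXS hSv h1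
    rw [Set.diff_diff_cancel_left (Set.singleton_subset_iff.mpr hv), Set.mem_singleton_iff] at hb1
    exact ⟨a1, ha1.1, fun h => ha1.2 (by simp [h]), hb1 ▸ hab1⟩
  obtain ⟨a1, ha1S, ha1ne, hab1⟩ := hin
  by_cases harc : ∃ a, (a ∈ S ∧ A v a) ∧ ∃ b, (b ∈ S ∧ A b v) ∧ A a b
  · obtain ⟨a, ⟨haS, hva⟩, b, ⟨hbS, hbv⟩, hab⟩ := harc
    exact ⟨a, b, haS, hbS, hva, hab, hbv⟩
  · exfalso
    -- X := {v} ∪ out-neighbours of v in S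
    set X : Set V := insert v {x | x ∈ S ∧ A v x} with hX
    have hXS' : X ⊆ S := by
      intro x hx
      rcases hx with rfl | hx
      · exact hv
      · exact hx.1
    have ha1X : a1 ∉ X := by
      intro hmem
      rcases hmem with rfl | hmem
      · exact ha1ne rfl
      · exact hT.1 v a1 hmem.2 hab1
    obtain ⟨a, ha, b, hb, hab⟩ := exists_cross hstrong hXS' ⟨v, Set.mem_insert _ _⟩
      ⟨a1, ha1S, ha1X⟩
    have hbS : b ∈ S := hb.1
    have hbnot : b ∉ X := hb.2
    have hbv : A b v := by
      have hbne : b ≠ v := by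
        intro h; exact hbnot (h ▸ Set.mem_insert _ _)
      rcases hT.2 v b hbne.symm with h | h
      · exact absurd (Set.mem_insert_of_mem v (show b ∈ {x | x ∈ S ∧ A v x} from ⟨hbS, h⟩)) hbnot
      · exact h
    rcases Set.mem_insert_iff.mp ha with heq | ha
    · rw [heq] at hab
      exact hbnot (Set.mem_insert_of_mem v (show b ∈ {x | x ∈ S ∧ A v x} from ⟨hbS, hab⟩))
    · exact harc ⟨a, ⟨ha.1, ha.2⟩, b, ⟨hbS, hbv⟩, hab⟩

end Aux2
section Aux3
variable {V : Type*} [Finite V]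

lemma two_distinct {X : Set V} (h3 : 2 ≤ X.ncard) : ∃ z ∈ X, ∃ x0 ∈ X, x0 ≠ z := by
  have h1 : X.Nonempty := by
    rw [Set.nonempty_iff_ne_empty]
    intro h
    rw [h] at h3
    simp at h3
  obtain ⟨z, hz⟩ := h1
  obtain ⟨x0, hx0⟩ := diff_singleton_nonempty (v := z) h3
  exact ⟨z, hz, x0, hx0.1, hx0.2⟩

lemma strong_three {A : V → V → Prop} {v a b : V}
    (hva : A v a) (hab : A a b) (hbv : A b v) :
    ∀ u ∈ ({v, a, b} : Set V), ∀ w ∈ ({v, a, b} : Set V),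
      Relation.ReflTransGen (resA A ({v, a, b} : Set V)) u w := by
  have hvX : v ∈ ({v, a, b} : Set V) := by simp
  have haX : a ∈ ({v, a, b} : Set V) := by simp
  have hbX : b ∈ ({v, a, b} : Set V) := by simp
  have Rva : Relation.ReflTransGen (resA A ({v, a, b} : Set V)) v a :=
    Relation.ReflTransGen.single ⟨hvX, haX, hva⟩
  have Rab : Relation.ReflTransGen (resA A ({v, a, b} : Set V)) a b :=
    Relation.ReflTransGen.single ⟨haX, hbX, hab⟩
  have Rbv : Relation.ReflTransGen (resA A ({v, a, b} : Set V)) b v :=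
    Relation.ReflTransGen.single ⟨hbX, hvX, hbv⟩
  have Rvb := Rva.trans Rab
  have Rav := Rab.trans Rbv
  have Rba := Rbv.trans Rva
  intro u hu w hw
  simp only [Set.mem_insert_iff, Set.mem_singleton_iff] at hu hw
  rcases hu with rfl | rfl | rfl <;> rcases hw with rfl | rfl | rfl
  · exact Relation.ReflTransGen.refl
  · exact Rva
  · exact Rvb
  · exact Rav
  · exact Relation.ReflTransGen.refl
  · exact Rab
  · exact Rbv
  · exact Rba
  · exact Relation.ReflTransGen.refl

lemma grow_step {A : V → V → Prop} (hT : IsTournament A) {S X : Set V}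
    (hstrongS : ∀ u ∈ S, ∀ v ∈ S, Relation.ReflTransGen (resA A S) u v)
    (hXS : X ⊆ S) (hXstrong : ∀ u ∈ X, ∀ v ∈ X, Relation.ReflTransGen (resA A X) u v)
    (h3 : 3 ≤ X.ncard) (hne : (S \ X).Nonempty) :
    ∃ X', X' ⊆ S ∧ X'.ncard = X.ncard + 1 ∧
      ∀ u ∈ X', ∀ v ∈ X', Relation.ReflTransGen (resA A X') u v := by
  have hXne : X.Nonempty := by
    obtain ⟨z, hz, _⟩ := two_distinct (X := X) (by omega)
    exact ⟨z, hz⟩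
  by_cases hcase : ∃ w ∈ S \ X, (∃ a ∈ X, A a w) ∧ (∃ b ∈ X, A w b)
  · obtain ⟨w, hw, ⟨a, haX, haw⟩, ⟨b, hbX, hwb⟩⟩ := hcase
    refine ⟨insert w X, Set.insert_subset hw.1 hXS,
      Set.ncard_insert_of_notMem hw.2 (Set.toFinite _), ?_⟩
    have hmono : ∀ p q, Relation.ReflTransGen (resA A X) p q →
        Relation.ReflTransGen (resA A (insert w X)) p q :=
      fun p q h => Relation.ReflTransGen.mono (r := resA A X) (p := resA A (insert w X))
        (fun x y hxy => ⟨Set.mem_insert_of_mem _ hxy.1, Set.mem_insert_of_mem _ hxy.2.1, hxy.2.2⟩) _ _ h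
    have htow : ∀ p ∈ X, Relation.ReflTransGen (resA A (insert w X)) p w := fun p hp =>
      (hmono p a (hXstrong p hp a haX)).tail
        ⟨Set.mem_insert_of_mem _ haX, Set.mem_insert _ _, haw⟩
    have hfromw : ∀ q ∈ X, Relation.ReflTransGen (resA A (insert w X)) w q := fun q hq =>
      Relation.ReflTransGen.head ⟨Set.mem_insert _ _, Set.mem_insert_of_mem _ hbX, hwb⟩
        (hmono b q (hXstrong b hbX q hq))
    intro u hu v hv
    rw [Set.mem_insert_iff] at hu hv
    rcases hu with rfl | hu
    · rcases hv with rfl | hv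
      · exact Relation.ReflTransGen.refl
      · exact hfromw v hv
    · rcases hv with rfl | hv
      · exact htow u hu
      · exact hmono u v (hXstrong u hu v hv)
  · push_neg at hcase
    have hclass : ∀ w ∈ S \ X, (∀ x ∈ X, A w x) ∨ (∀ x ∈ X, A x w) := by
      intro w hw
      by_cases hex : ∃ a ∈ X, A a w
      · right
        intro x hx
        have hnot := hcase w hw hex x hx
        have hne' : w ≠ x := fun h => hw.2 (h ▸ hx)
        rcases hT.2 w x hne' with h | h
        · exact absurd h hnot
        · exact h
      · left
        push_neg at hex
        intro x hx
        have hne' : w ≠ x := fun h => hw.2 (h ▸ hx)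
        rcases hT.2 w x hne' with h | h
        · exact h
        · exact absurd h (hex x hx)
    have hdiffS : S \ X ⊆ S := Set.diff_subset
    have hXback : S \ (S \ X) = X := Set.diff_diff_cancel_left hXS
    -- P nonempty : some w in S\X dominating X
    have hPne : ∃ w ∈ S \ X, ∀ x ∈ X, A w x := by
      obtain ⟨d, hd, x1, hx1, hdx⟩ :=
        exists_cross hstrongS hdiffS hne (by rw [hXback]; exact hXne)
      rw [hXback] at hx1
      rcases hclass d hd with h | h
      · exact ⟨d, hd, h⟩
      · exact absurd hdx (hT.1 x1 d (h x1 hx1))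
    -- Q nonempty
    have hQne : ∃ w ∈ S \ X, ∀ x ∈ X, A x w := by
      obtain ⟨a, ha, w0, hw0, haw0⟩ := exists_cross hstrongS hXS hXne hne
      rcases hclass w0 hw0 with h | h
      · exact absurd haw0 (hT.1 w0 a (h a ha))
      · exact ⟨w0, hw0, h⟩
    -- arc from Q-type to P-type
    have hqparc : ∃ q ∈ S \ X, (∀ x ∈ X, A x q) ∧ ∃ p ∈ S \ X, (∀ x ∈ X, A p x) ∧ A q p := by
      by_contra hno
      push_neg at hno
      set P : Set V := {w | w ∈ S ∧ w ∉ X ∧ ∀ x ∈ X, A w x} with hPdef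
      have hPS : P ⊆ S := fun w hw => hw.1
      have hPne' : P.Nonempty := by
        obtain ⟨w, hw, h⟩ := hPne
        exact ⟨w, hw.1, hw.2, h⟩
      have hXP : X ⊆ S \ P := fun x hx => ⟨hXS hx, fun hP => hP.2.1 hx⟩
      obtain ⟨x0, hx0⟩ := hXne
      obtain ⟨a, ha, b, hb, hab⟩ := exists_cross hstrongS Set.diff_subset
        ⟨x0, hXP hx0⟩ (by rw [Set.diff_diff_cancel_left hPS]; exact hPne')
      rw [Set.diff_diff_cancel_left hPS] at hb
      by_cases haX : a ∈ X
      · exact hT.1 b a (hb.2.2 a haX) hab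
      · have haSX : a ∈ S \ X := ⟨ha.1, haX⟩
        rcases hclass a haSX with h | h
        · exact ha.2 ⟨ha.1, haX, h⟩
        · exact hno a haSX h b ⟨hb.1, hb.2.1⟩ hb.2.2 hab
    obtain ⟨q, hqSX, hqdom, p, hpSX, hpdom, hqp⟩ := hqparc
    obtain ⟨z, hzX, x0, hx0X, hx0ne⟩ := two_distinct (X := X) (by omega)
    have hpq : p ≠ q := fun h => hT.1 q p hqp (h ▸ hqp)
    refine ⟨insert p (insert q (X \ {z})), ?_, ?_, ?_⟩
    · intro x hx
      rcases Set.mem_insert_iff.mp hx with rfl | hx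
      · exact hpSX.1
      rcases Set.mem_insert_iff.mp hx with rfl | hx
      · exact hqSX.1
      · exact hXS hx.1
    · have hqnot : q ∉ X \ {z} := fun h => hqSX.2 h.1
      have hpnot : p ∉ insert q (X \ {z}) := by
        intro h
        rcases Set.mem_insert_iff.mp h with h | h
        · exact hpq h
        · exact hpSX.2 h.1
      rw [Set.ncard_insert_of_notMem hpnot (Set.toFinite _),
        Set.ncard_insert_of_notMem hqnot (Set.toFinite _),
        Set.ncard_diff_singleton_of_mem hzX]
      omega
    · set X' : Set V := insert p (insert q (X \ {z})) with hX'def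
      have hpX' : p ∈ X' := Set.mem_insert _ _
      have hqX' : q ∈ X' := Set.mem_insert_of_mem _ (Set.mem_insert _ _)
      have hxX' : ∀ x ∈ X \ {z}, x ∈ X' := fun x hx =>
        Set.mem_insert_of_mem _ (Set.mem_insert_of_mem _ hx)
      have hx0' : x0 ∈ X \ {z} := ⟨hx0X, hx0ne⟩
      have Rqp : Relation.ReflTransGen (resA A X') q p :=
        Relation.ReflTransGen.single ⟨hqX', hpX', hqp⟩
      have Rpx : ∀ x ∈ X \ {z}, Relation.ReflTransGen (resA A X') p x := fun x hx =>
        Relation.ReflTransGen.single ⟨hpX', hxX' x hx, hpdom x hx.1⟩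
      have Rxq : ∀ x ∈ X \ {z}, Relation.ReflTransGen (resA A X') x q := fun x hx =>
        Relation.ReflTransGen.single ⟨hxX' x hx, hqX', hqdom x hx.1⟩
      have Rpq : Relation.ReflTransGen (resA A X') p q := (Rpx x0 hx0').trans (Rxq x0 hx0')
      have Rqx : ∀ x ∈ X \ {z}, Relation.ReflTransGen (resA A X') q x := fun x hx =>
        Rqp.trans (Rpx x hx)
      have Rxp : ∀ x ∈ X \ {z}, Relation.ReflTransGen (resA A X') x p := fun x hx =>
        (Rxq x hx).trans Rqp
      intro u hu v hv
      rw [hX'def, Set.mem_insert_iff, Set.mem_insert_iff] at hu hv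
      rcases hu with rfl | rfl | hu
      · rcases hv with rfl | rfl | hv
        · exact Relation.ReflTransGen.refl
        · exact Rpq
        · exact Rpx v hv
      · rcases hv with rfl | rfl | hv
        · exact Rqp
        · exact Relation.ReflTransGen.refl
        · exact Rqx v hv
      · rcases hv with rfl | rfl | hv
        · exact Rxp u hu
        · exact Rxq u hu
        · exact (Rxq u hu).trans (Rqx v hv)

lemma grow_all {A : V → V → Prop} (hT : IsTournament A) {S : Set V}
    (hstrongS : ∀ u ∈ S, ∀ v ∈ S, Relation.ReflTransGen (resA A S) u v) :
    ∀ m, 3 ≤ m → m ≤ S.ncard → ∃ X, X ⊆ S ∧ X.ncard = m ∧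
      ∀ u ∈ X, ∀ v ∈ X, Relation.ReflTransGen (resA A X) u v := by
  intro m
  induction m with
  | zero => omega
  | succ m ih =>
    intro h3 hle
    by_cases hm : m = 2
    · subst hm
      have h2 : 2 ≤ S.ncard := by omega
      have hSne : S.Nonempty := by
        rw [Set.nonempty_iff_ne_empty]
        intro h
        rw [h] at h2
        simp at h2
      obtain ⟨v, hv⟩ := hSne
      obtain ⟨a, b, haS, hbS, hva, hab, hbv⟩ := triangle_through hT hstrongS hv h2
      have hva' : v ≠ a := by intro h; rw [h] at hva; exact hT.1 a a hva hva
      have hab' : a ≠ b := by intro h; rw [h] at hab; exact hT.1 b b hab hab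
      have hbv' : b ≠ v := by intro h; rw [h] at hbv; exact hT.1 v v hbv hbv
      refine ⟨{v, a, b}, ?_, ?_, strong_three hva hab hbv⟩
      · intro x hx
        rcases hx with rfl | rfl | rfl
        · exact hv
        · exact haS
        · exact hbS
      · rw [Set.ncard_insert_of_notMem (by simp [hva', hbv'.symm]) (Set.toFinite _),
          Set.ncard_insert_of_notMem (by simp [hab']) (Set.toFinite _),
          Set.ncard_singleton]
    · have h3m : 3 ≤ m := by omega
      obtain ⟨X, hXS, hXcard, hXstrong⟩ := ih h3m (by omega)
      have hne : (S \ X).Nonempty := by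
        rw [Set.nonempty_iff_ne_empty]
        intro h
        have hsub : S ⊆ X := Set.diff_eq_empty.mp h
        have := Set.ncard_le_ncard hsub (Set.toFinite _)
        omega
      obtain ⟨X', h1, h2', h3'⟩ := grow_step hT hstrongS hXS hXstrong (by omega) hne
      exact ⟨X', h1, by omega, h3'⟩

end Aux3
section Aux4
variable {V : Type*} [Finite V]

omit [Finite V] in
lemma mem_p3s_of {A : V → V → Prop} {u v w : V}
    (h : (A u w ∧ A w v ∧ ¬ A u v) ∨ (A v w ∧ A w u ∧ ¬ A v u)) :
    w ∈ p3sInterval A u v := Or.inr h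

omit [Finite V] in
lemma p3s_cases {A : V → V → Prop} {u v w : V} (h : w ∈ p3sInterval A u v) :
    w = u ∨ w = v ∨ (A u w ∧ A w v ∧ ¬ A u v) ∨ (A v w ∧ A w u ∧ ¬ A v u) := by
  rcases h with h | h
  · rcases h with rfl | h
    · exact Or.inl rfl
    · exact Or.inr (Or.inl h)
  · exact Or.inr (Or.inr h)

omit [Finite V] in
lemma resS_convex (A : V → V → Prop) (S : Set V) :
    IsConvexSet (p3sInterval (resA A S)) S := by
  intro u hu v hv w hw
  rcases p3s_cases hw with rfl | rfl | ⟨⟨_, hwS, _⟩, _⟩ | ⟨⟨_, hwS, _⟩, _⟩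
  · exact hu
  · exact hv
  · exact hwS
  · exact hwS

omit [Finite V] in
lemma hull_transfer {A : V → V → Prop} {X S : Set V} (hXS : X ⊆ S) {u0 v0 : V}
    (hu0 : u0 ∈ X) (hv0 : v0 ∈ X)
    (h : convexHullD (p3sInterval (resA A X)) {u0, v0} = X) :
    X ⊆ convexHullD (p3sInterval (resA A S)) {u0, v0} := by
  intro x hx C hC
  obtain ⟨hCconv, hCsub⟩ := hC
  have hconv : IsConvexSet (p3sInterval (resA A X)) (C ∩ X) := by
    intro u hu v hv w hw
    rcases p3s_cases hw with rfl | rfl | hw | hw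
    · exact hu
    · exact hv
    · obtain ⟨⟨huX, hwX, huw⟩, ⟨_, hvX, hwv⟩, hnuv⟩ := hw
      have hwS : w ∈ p3sInterval (resA A S) u v :=
        mem_p3s_of (Or.inl ⟨⟨hXS huX, hXS hwX, huw⟩, ⟨hXS hwX, hXS hvX, hwv⟩,
          fun hres => hnuv ⟨huX, hvX, hres.2.2⟩⟩)
      exact ⟨hCconv u hu.1 v hv.1 hwS, hwX⟩
    · obtain ⟨⟨hvX, hwX, hvw⟩, ⟨_, huX, hwu⟩, hnvu⟩ := hw
      have hwS : w ∈ p3sInterval (resA A S) u v :=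
        mem_p3s_of (Or.inr ⟨⟨hXS hvX, hXS hwX, hvw⟩, ⟨hXS hwX, hXS huX, hwu⟩,
          fun hres => hnvu ⟨hvX, huX, hres.2.2⟩⟩)
      exact ⟨hCconv u hu.1 v hv.1 hwS, hwX⟩
  have hsub2 : ({u0, v0} : Set V) ⊆ C ∩ X := by
    intro y hy
    rcases hy with rfl | rfl
    · exact ⟨hCsub (Set.mem_insert _ _), hu0⟩
    · exact ⟨hCsub (Set.mem_insert_of_mem _ rfl), hv0⟩
  have hfin := hullD_subset hconv hsub2
  rw [h] at hfin
  exact (hfin hx).1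

lemma main_aux (A : V → V → Prop) (hT : IsTournament A) :
    ∀ n : ℕ, ∀ S : Set V, S.ncard = n →
      (∀ u ∈ S, ∀ v ∈ S, Relation.ReflTransGen (resA A S) u v) → 2 ≤ n →
      ∃ u v, u ∈ S ∧ v ∈ S ∧ u ≠ v ∧ convexHullD (p3sInterval (resA A S)) {u, v} = S := by
  intro n
  induction n using Nat.strong_induction_on with
  | _ n IH =>
    intro S hcard hstrong h2
    by_cases hn2 : n = 2
    · exfalso
      rw [hn2] at hcard
      obtain ⟨u, v, huv, hS⟩ := Set.ncard_eq_two.mp hcard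
      subst hS
      have hAuv : A u v := by
        obtain ⟨a, ha, b, hb, hab⟩ := exists_cross hstrong
          (show ({u} : Set V) ⊆ {u, v} by simp) ⟨u, rfl⟩
          ⟨v, by simp [Ne.symm huv]⟩
        rw [Set.mem_singleton_iff] at ha
        have hbv : b = v := by
          rcases hb.1 with h | h
          · exact absurd h hb.2
          · exact h
        rw [ha, hbv] at hab
        exact hab
      have hAvu : A v u := by
        obtain ⟨a, ha, b, hb, hab⟩ := exists_cross hstrong
          (show ({v} : Set V) ⊆ {u, v} by simp) ⟨v, rfl⟩
          ⟨u, by simp [huv]⟩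
        rw [Set.mem_singleton_iff] at ha
        have hbu : b = u := by
          rcases hb.1 with h | h
          · exact h
          · exact absurd h hb.2
        rw [ha, hbu] at hab
        exact hab
      exact hT.1 u v hAuv hAvu
    by_cases hn3 : n = 3
    · rw [hn3] at hcard
      have h2' : 2 ≤ S.ncard := by omega
      have hSne : S.Nonempty := Set.nonempty_of_ncard_ne_zero (by omega)
      obtain ⟨v, hv⟩ := hSne
      obtain ⟨a, b, haS, hbS, hva, hab, hbv⟩ := triangle_through hT hstrong hv h2'
      have hva' : v ≠ a := by intro h; rw [h] at hva; exact hT.1 a a hva hva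
      have hab' : a ≠ b := by intro h; rw [h] at hab; exact hT.1 b b hab hab
      have hbv' : b ≠ v := by intro h; rw [h] at hbv; exact hT.1 v v hbv hbv
      have hsub : ({v, a, b} : Set V) ⊆ S := by
        intro x hx
        rcases hx with rfl | rfl | rfl
        exacts [hv, haS, hbS]
      have hc3 : ({v, a, b} : Set V).ncard = 3 := by
        rw [Set.ncard_insert_of_notMem (by simp [hva', hbv'.symm]) (Set.toFinite _),
          Set.ncard_insert_of_notMem (by simp [hab']) (Set.toFinite _),
          Set.ncard_singleton]
      have hSeq : ({v, a, b} : Set V) = S :=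
        Set.eq_of_subset_of_ncard_le hsub (by rw [hcard, hc3]) (Set.toFinite _)
      refine ⟨b, a, hbS, haS, hab'.symm, ?_⟩
      apply Set.Subset.antisymm
      · exact hullD_subset (resS_convex A S) (by
          intro x hx
          rcases hx with rfl | rfl
          exacts [hbS, haS])
      · intro x hx
        have hbH : b ∈ convexHullD (p3sInterval (resA A S)) {b, a} :=
          subset_hullD _ _ (by simp)
        have haH : a ∈ convexHullD (p3sInterval (resA A S)) {b, a} :=
          subset_hullD _ _ (by simp)
        have hvH : v ∈ convexHullD (p3sInterval (resA A S)) {b, a} :=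
          hullD_convex _ _ b hbH a haH
            (mem_p3s_of (Or.inl ⟨⟨hbS, hv, hbv⟩, ⟨hv, haS, hva⟩,
              fun hres => hT.1 a b hab hres.2.2⟩))
        rw [← hSeq] at hx
        rcases hx with rfl | rfl | rfl
        exacts [hvH, haH, hbH]
    · have h4 : 4 ≤ n := by omega
      obtain ⟨X, hXS, hXcard, hXstrong⟩ := grow_all hT hstrong (n - 1) (by omega) (by omega)
      have hdiff : (S \ X).ncard = 1 := by
        rw [Set.ncard_diff hXS (Set.toFinite _)]
        omega
      obtain ⟨v, hveq⟩ := Set.ncard_eq_one.mp hdiff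
      have hvSX : v ∈ S \ X := by rw [hveq]; rfl
      have hvS : v ∈ S := hvSX.1
      have hvX : v ∉ X := hvSX.2
      have hXeq : X = S \ {v} := by
        apply Set.Subset.antisymm
        · intro x hx
          refine ⟨hXS hx, ?_⟩
          intro hh
          rw [Set.mem_singleton_iff] at hh
          rw [hh] at hx
          exact hvX hx
        · intro x hx
          by_contra hxX
          have hmem : x ∈ S \ X := ⟨hx.1, hxX⟩
          rw [hveq] at hmem
          exact hx.2 hmem
      obtain ⟨u0, v0, hu0X, hv0X, hne0, hhX⟩ := IH (n - 1) (by omega) X hXcard hXstrong (by omega)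
      have htrans := hull_transfer hXS hu0X hv0X hhX
      obtain ⟨a, b, haS, hbS, hva, hab, hbv⟩ := triangle_through hT hstrong hvS (by omega)
      have hva' : v ≠ a := by intro h; rw [h] at hva; exact hT.1 a a hva hva
      have hbv' : b ≠ v := by intro h; rw [h] at hbv; exact hT.1 v v hbv hbv
      have haX : a ∈ X := by rw [hXeq]; exact ⟨haS, fun h => hva' (Set.mem_singleton_iff.mp h).symm⟩
      have hbX : b ∈ X := by rw [hXeq]; exact ⟨hbS, fun h => hbv' (Set.mem_singleton_iff.mp h)⟩
      have haH := htrans haX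
      have hbH := htrans hbX
      have hvH : v ∈ convexHullD (p3sInterval (resA A S)) {u0, v0} :=
        hullD_convex _ _ b hbH a haH
          (mem_p3s_of (Or.inl ⟨⟨hbS, hvS, hbv⟩, ⟨hvS, haS, hva⟩,
            fun hres => hT.1 a b hab hres.2.2⟩))
      refine ⟨u0, v0, hXS hu0X, hXS hv0X, hne0, ?_⟩
      apply Set.Subset.antisymm
      · exact hullD_subset (resS_convex A S) (by
          intro x hx
          rcases hx with rfl | rfl
          exacts [hXS hu0X, hXS hv0X])
      · intro x hx
        by_cases hxv : x = v
        · rw [hxv]; exact hvH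
        · exact htrans (by rw [hXeq]; exact ⟨hx, hxv⟩)

end Aux4
section Aux5
variable {V : Type*}

lemma resA_univ (A : V → V → Prop) : resA A Set.univ = A := by
  funext a b
  simp [resA]

lemma diwalk_to_rtg {A : V → V → Prop} :
    ∀ (l : List V) (u v : V), DiWalk A u v l → Relation.ReflTransGen A u v := by
  intro l
  induction l with
  | nil => intro u v h; simp [DiWalk] at h
  | cons x rest ih =>
    intro u v h
    obtain ⟨hh, hl, hc⟩ := h
    rw [List.head?_cons, Option.some_inj] at hh
    subst hh
    cases rest with
    | nil =>
      simp [List.getLast?] at hl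
      rw [hl]
    | cons y rest' =>
      rw [List.getLast?_cons_cons] at hl
      rw [List.Chain', List.isChain_cons_cons] at hc
      exact Relation.ReflTransGen.head hc.1 (ih y v ⟨rfl, hl, hc.2⟩)

lemma geodesic_self {A : V → V → Prop} {u : V} {l : List V} (h : IsGeodesic A u u l) :
    l = [u] := by
  obtain ⟨⟨hh, hl, hc⟩, hmin⟩ := h
  have hw : DiWalk A u u [u] := ⟨rfl, by simp, List.isChain_singleton u⟩
  have hlen := hmin [u] hw
  simp at hlen
  cases l with
  | nil => simp at hh
  | cons x rest =>
    rw [List.head?_cons, Option.some_inj] at hh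
    cases rest with
    | nil => rw [hh]
    | cons y r => simp at hlen

lemma singleton_geo_convex (A : V → V → Prop) (u : V) :
    IsConvexSet (geoInterval A) {u} := by
  intro x hx y hy w hw
  rw [Set.mem_singleton_iff] at hx hy
  subst hx; subst hy
  rcases hw with hw | hw
  · rcases hw with rfl | hw
    · rfl
    · exact hw
  · rw [Set.mem_singleton_iff]
    rcases hw with ⟨l, hg, hwl⟩ | ⟨l, hg, hwl⟩ <;>
    · rw [geodesic_self hg] at hwl
      simpa using hwl

lemma singleton_p3s_convex {A : V → V → Prop} (hor : ∀ a b, A a b → ¬ A b a) (u : V) :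
    IsConvexSet (p3sInterval A) {u} := by
  intro x hx y hy w hw
  rw [Set.mem_singleton_iff] at hx hy
  rcases p3s_cases hw with rfl | rfl | ⟨h1, h2, _⟩ | ⟨h1, h2, _⟩
  · exact hx
  · exact hy
  · rw [hx] at h1; rw [hy] at h2; exact absurd h2 (hor u w h1)
  · rw [hy] at h1; rw [hx] at h2; exact absurd h2 (hor u w h1)

lemma geo_mid {A : V → V → Prop} (hor : ∀ a b, A a b → ¬ A b a) {u v w : V}
    (huw : A u w) (hwv : A w v) (hnuv : ¬ A u v) :
    ∃ l, IsGeodesic A u v l ∧ w ∈ l := by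
  have huv : u ≠ v := by rintro rfl; exact hor u w huw hwv
  refine ⟨[u, w, v], ⟨⟨rfl, by simp, by simp [List.Chain', huw, hwv]⟩, ?_⟩, by simp⟩
  intro l' hl'
  obtain ⟨hh, hl, hc⟩ := hl'
  match l' with
  | [] => simp at hh
  | [a] =>
    rw [List.head?_cons, Option.some_inj] at hh
    simp [List.getLast?] at hl
    exact absurd (hh.symm.trans hl) huv
  | [a, b] =>
    rw [List.head?_cons, Option.some_inj] at hh
    simp [List.getLast?] at hl
    simp [List.Chain'] at hc
    rw [hh, hl] at hc
    exact absurd hc hnuv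
  | a :: b :: c :: r => simp

lemma p3s_subset_geo {A : V → V → Prop} (hor : ∀ a b, A a b → ¬ A b a) (u v : V) :
    p3sInterval A u v ⊆ geoInterval A u v := by
  intro w hw
  rcases p3s_cases hw with rfl | rfl | ⟨h1, h2, h3⟩ | ⟨h1, h2, h3⟩
  · exact Or.inl (Set.mem_insert _ _)
  · exact Or.inl (Set.mem_insert_of_mem _ rfl)
  · exact Or.inr (Or.inl (geo_mid hor h1 h2 h3))
  · exact Or.inr (Or.inr (geo_mid hor h1 h2 h3))

lemma geo_hull_univ {A : V → V → Prop} (hor : ∀ a b, A a b → ¬ A b a) {S : Set V}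
    (h : convexHullD (p3sInterval A) S = Set.univ) :
    convexHullD (geoInterval A) S = Set.univ := by
  apply Set.eq_univ_of_univ_subset
  rw [← h]
  intro x hx C hC
  exact hx C ⟨fun a ha b hb w hw => hC.1 a ha b hb (p3s_subset_geo hor a b hw), hC.2⟩

lemma hullNumber_eq_two {I : V → V → Set V}
    (hub : ∃ S : Set V, IsHullSet I S ∧ S.ncard = 2)
    (hlb : ∀ S : Set V, IsHullSet I S → 2 ≤ S.ncard) :
    hullNumber I = 2 := by
  obtain ⟨S0, hS0, hc0⟩ := hub
  rw [hullNumber]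
  apply le_antisymm
  · exact Nat.sInf_le (show 2 ∈ {k | ∃ S : Set V, IsHullSet I S ∧ S.ncard = k} from ⟨S0, hS0, hc0⟩)
  · refine le_csInf ⟨2, S0, hS0, hc0⟩ ?_
    rintro k ⟨S, hS, rfl⟩
    exact hlb S hS

lemma hull_lb [Finite V] {I : V → V → Set V} (hnt : Nontrivial V)
    (hsing : ∀ u : V, IsConvexSet I {u}) :
    ∀ S : Set V, IsHullSet I S → 2 ≤ S.ncard := by
  intro S hS
  by_contra hcon
  push_neg at hcon
  have : S.ncard = 0 ∨ S.ncard = 1 := by omega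
  rcases this with h0 | h1
  · have hemp : S = ∅ := (Set.ncard_eq_zero (Set.toFinite _)).mp h0
    have hsub : convexHullD I S ⊆ ∅ := by
      rw [hemp]
      exact hullD_subset (fun u hu => absurd hu (Set.notMem_empty u)) (subset_refl _)
    obtain ⟨x, y, hxy⟩ := hnt
    have : x ∈ convexHullD I S := by rw [hS]; trivial
    exact hsub this
  · obtain ⟨u, hu⟩ := Set.ncard_eq_one.mp h1
    have hsub : convexHullD I S ⊆ {u} := by
      rw [hu]
      exact hullD_subset (hsing u) (subset_refl _)
    obtain ⟨y, hy⟩ := exists_ne u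
    have : y ∈ convexHullD I S := by rw [hS]; trivial
    exact hy (hsub this)

end Aux5
/-- A strongly connected tournament on at least two vertices has
hull number 2 in both the P3* and the geodetic convexities. -/
theorem stmt_8 {V : Type*} [Finite V] (A : V → V → Prop)
    (hT : IsTournament A) (hsc : StronglyConnected A) (h2 : 2 ≤ Nat.card V) :
    hullNumber (p3sInterval A) = 2 ∧ hullNumber (geoInterval A) = 2 := by
  have hor := hT.1
  have hnt : Nontrivial V := Finite.one_lt_card_iff_nontrivial.mp (by omega)
  have hstrong : ∀ u ∈ (Set.univ : Set V), ∀ v ∈ (Set.univ : Set V),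
      Relation.ReflTransGen (resA A Set.univ) u v := by
    intro u _ v _
    obtain ⟨l, hl⟩ := hsc u v
    exact Relation.ReflTransGen.mono (r := A) (p := resA A Set.univ) (fun a b h => ⟨trivial, trivial, h⟩)
      _ _ (diwalk_to_rtg l u v hl)
  have hcard : (Set.univ : Set V).ncard = Nat.card V := Set.ncard_univ V
  obtain ⟨u, v, _, _, huv, hhull⟩ :=
    main_aux A hT (Nat.card V) Set.univ hcard hstrong h2
  rw [resA_univ] at hhull
  have hub_p3s : ∃ S : Set V, IsHullSet (p3sInterval A) S ∧ S.ncard = 2 :=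
    ⟨{u, v}, hhull, Set.ncard_pair huv⟩
  have hub_geo : ∃ S : Set V, IsHullSet (geoInterval A) S ∧ S.ncard = 2 :=
    ⟨{u, v}, geo_hull_univ hor hhull, Set.ncard_pair huv⟩
  constructor
  · exact hullNumber_eq_two hub_p3s (hull_lb hnt (fun u0 => singleton_p3s_convex hor u0))
  · exact hullNumber_eq_two hub_geo (hull_lb hnt (singleton_geo_convex A))
end

section
/- If T is a tournament with at least two vertices, then the hull number of T in the P3 convexity equals 2: hn_{P3}(T) = 2. -/
lemma hull_convex' {V : Type*} (I : V → V → Set V) (S : Set V) :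
    IsConvexSet I (convexHullD I S) := by
  intro u hu v hv w hw
  intro C hC
  exact hC.1 u (hu C hC) v (hv C hC) hw

lemma subset_hull' {V : Type*} (I : V → V → Set V) (S : Set V) :
    S ⊆ convexHullD I S := by
  intro x hx C hC
  exact hC.2 hx

lemma hull_subset' {V : Type*} (I : V → V → Set V) (S C : Set V)
    (hC : IsConvexSet I C) (hSC : S ⊆ C) : convexHullD I S ⊆ C :=
  Set.sInter_subset_of_mem ⟨hC, hSC⟩

lemma key_pair {V : Type*} [Finite V] (A : V → V → Prop) (hT : IsTournament A) :
    ∀ n : ℕ, ∀ S : Set V, S.ncard = n → 2 ≤ n →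
      ∃ u v, u ∈ S ∧ v ∈ S ∧ u ≠ v ∧ S ⊆ convexHullD (p3Interval A) {u, v} := by
  intro n
  induction n using Nat.strong_induction_on with
  | _ n IH =>
    intro S hS h2
    rcases eq_or_lt_of_le h2 with h2' | h3
    · -- n = 2
      rw [← h2'] at hS
      obtain ⟨a, b, hab, rfl⟩ := Set.ncard_eq_two.mp hS
      exact ⟨a, b, by simp, by simp, hab, subset_hull' _ _⟩
    · -- n ≥ 3 : find z ∈ S with an in-neighbor and an out-neighbor in S
      have hfin : S.Finite := Set.toFinite S
      have hn0 : S.ncard ≠ 0 := by omega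
      obtain ⟨x, hx⟩ := Set.nonempty_of_ncard_ne_zero hn0
      obtain ⟨y, hy, hyx⟩ := Set.exists_ne_of_one_lt_ncard (show 1 < S.ncard by omega) x
      have hdiff : 1 ≤ (S \ {x, y}).ncard := by
        have hsub : ({x, y} : Set V) ⊆ S := by
          intro t ht; rcases ht with rfl | rfl
          · exact hx
          · exact hy
        have hd := Set.ncard_diff hsub (Set.toFinite _)
        have hxy : ({x, y} : Set V).ncard = 2 := Set.ncard_pair (Ne.symm hyx)
        rw [hxy, hS] at hd
        omega
      obtain ⟨w, hw⟩ := Set.nonempty_of_ncard_ne_zero (by omega : (S \ {x, y}).ncard ≠ 0)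
      have hwS : w ∈ S := hw.1
      have hwx : w ≠ x := fun h => hw.2 (by simp [h])
      have hwy : w ≠ y := fun h => hw.2 (by simp [h])
      -- z exists
      have hz : ∃ z ∈ S, (∃ a ∈ S, A a z) ∧ (∃ b ∈ S, A z b) := by
        by_contra hcon
        push_neg at hcon
        -- each vertex of S is a "source" (no in-arc) or "sink" (no out-arc) in S
        have hPQ : ∀ z ∈ S, (∀ a ∈ S, ¬ A a z) ∨ (∀ b ∈ S, ¬ A z b) := by
          intro z hzS
          by_contra hh
          push_neg at hh
          obtain ⟨⟨a, ha, haz⟩, b, hb, hzb⟩ := hh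
          exact absurd hzb (hcon z hzS ⟨a, ha, haz⟩ b hb)
        -- at most one source, at most one sink
        have noTwoP : ∀ p q, p ∈ S → q ∈ S → p ≠ q →
            (∀ a ∈ S, ¬ A a p) → (∀ a ∈ S, ¬ A a q) → False := by
          intro p q hp hq hpq h1 h2
          rcases hT.2 p q hpq with h | h
          · exact h2 p hp h
          · exact h1 q hq h
        have noTwoQ : ∀ p q, p ∈ S → q ∈ S → p ≠ q →
            (∀ b ∈ S, ¬ A p b) → (∀ b ∈ S, ¬ A q b) → False := by
          intro p q hp hq hpq h1 h2
          rcases hT.2 p q hpq with h | h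
          · exact h1 q hq h
          · exact h2 p hp h
        rcases hPQ x hx with hx' | hx' <;> rcases hPQ y hy with hy' | hy' <;>
          rcases hPQ w hwS with hw' | hw'
        · exact noTwoP x y hx hy (Ne.symm hyx) hx' hy'
        · exact noTwoP x y hx hy (Ne.symm hyx) hx' hy'
        · exact noTwoP x w hx hwS (Ne.symm hwx) hx' hw'
        · exact noTwoQ y w hy hwS (Ne.symm hwy) hy' hw'
        · exact noTwoP y w hy hwS (Ne.symm hwy) hy' hw'
        · exact noTwoQ x w hx hwS (Ne.symm hwx) hx' hw'
        · exact noTwoQ x y hx hy (Ne.symm hyx) hx' hy'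
        · exact noTwoQ x y hx hy (Ne.symm hyx) hx' hy'
      obtain ⟨z, hzS, ⟨a, haS, haz⟩, b, hbS, hzb⟩ := hz
      have haz' : a ≠ z := fun h => hT.1 a z haz (h ▸ haz)
      have hbz' : b ≠ z := fun h => hT.1 z b hzb (h ▸ hzb)
      -- apply IH to S \ {z}
      have hcard : (S \ {z}).ncard = n - 1 := by
        rw [Set.ncard_diff_singleton_of_mem hzS, hS]
      obtain ⟨u, v, hu, hv, huv, hhull⟩ :=
        IH (n - 1) (by omega) (S \ {z}) hcard (by omega)
      refine ⟨u, v, hu.1, hv.1, huv, ?_⟩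
      intro t ht
      by_cases htz : t = z
      · subst htz
        have haH : a ∈ convexHullD (p3Interval A) {u, v} := hhull ⟨haS, haz'⟩
        have hbH : b ∈ convexHullD (p3Interval A) {u, v} := hhull ⟨hbS, hbz'⟩
        exact hull_convex' (p3Interval A) {u, v} a haH b hbH
          (Or.inr (Or.inl ⟨haz, hzb⟩))
      · exact hhull ⟨ht, htz⟩

/-- A tournament on at least two vertices has P3 hull number 2. -/
theorem stmt_11 {V : Type*} [Finite V] (A : V → V → Prop)
    (hT : IsTournament A) (h2 : 2 ≤ Nat.card V) :
    hullNumber (p3Interval A) = 2 := by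
  have hV : Nontrivial V := Finite.one_lt_card_iff_nontrivial.mp (by omega)
  obtain ⟨u, v, hu, hv, huv, hhull⟩ := key_pair A hT (Nat.card V)
    (Set.univ : Set V) (Set.ncard_univ V) h2
  have hmem2 : 2 ∈ {k | ∃ S : Set V, IsHullSet (p3Interval A) S ∧ S.ncard = k} := by
    refine ⟨{u, v}, ?_, Set.ncard_pair huv⟩
    exact Set.eq_univ_of_univ_subset hhull
  have hne : {k | ∃ S : Set V, IsHullSet (p3Interval A) S ∧ S.ncard = k}.Nonempty :=
    ⟨2, hmem2⟩
  have hmemInf := Nat.sInf_mem hne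
  obtain ⟨S, hSh, hSc⟩ := hmemInf
  have hlow : 2 ≤ sInf {k | ∃ S : Set V, IsHullSet (p3Interval A) S ∧ S.ncard = k} := by
    by_contra hlt
    push_neg at hlt
    interval_cases h : sInf {k | ∃ S : Set V, IsHullSet (p3Interval A) S ∧ S.ncard = k}
    · -- sInf = 0 : S = ∅
      have hSe : S = ∅ := (Set.ncard_eq_zero (Set.toFinite S)).mp hSc
      subst hSe
      have : convexHullD (p3Interval A) (∅ : Set V) ⊆ ∅ :=
        hull_subset' _ _ _ (by intro a ha; exact absurd ha (Set.notMem_empty a))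
          (subset_refl _)
      rw [hSh] at this
      exact absurd (this (Set.mem_univ u)) (Set.notMem_empty u)
    · -- sInf = 1 : S = {w}
      obtain ⟨w, rfl⟩ := Set.ncard_eq_one.mp hSc
      have hconv : IsConvexSet (p3Interval A) ({w} : Set V) := by
        intro p hp q hq t ht
        rcases hp with rfl
        rcases hq with rfl
        rcases ht with (rfl | rfl) | ⟨h1, h2⟩ | ⟨h1, h2⟩
        · rfl
        · rfl
        · exact absurd h2 (hT.1 _ _ h1)
        · exact absurd h2 (hT.1 _ _ h1)
      have hsub : convexHullD (p3Interval A) ({w} : Set V) ⊆ {w} :=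
        hull_subset' _ _ _ hconv (subset_refl _)
      rw [hSh] at hsub
      obtain ⟨p, hp⟩ := exists_ne w
      exact hp (hsub (Set.mem_univ p))
  exact le_antisymm (Nat.sInf_le hmem2) hlow
end

section
/- Let D be an oriented graph, let T be a subdigraph of D that is a tournament, and let S be a minimum hull set of D in the P3 convexity. Then |S ∩ V(T)| ≤ 2. -/
lemma key_contra {V : Type*} [Finite V] (I : V → V → Set V) (S : Set V)
    (hS : IsHullSet I S) (hmin : S.ncard = hullNumber I)
    (x y z : V) (hx : x ∈ S) (hy : y ∈ S) (hz : z ∈ S)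
    (hxy : x ≠ y) (hzy : z ≠ y) (hmem : y ∈ I x z) : False := by
  set S' := S \ {y} with hS'def
  have hx' : x ∈ S' := ⟨hx, hxy⟩
  have hz' : z ∈ S' := ⟨hz, hzy⟩
  have hy' : y ∈ convexHullD I S' :=
    hull_convex' I S' x (subset_hull' I S' hx') z (subset_hull' I S' hz') hmem
  have hSsub : S ⊆ convexHullD I S' := by
    intro w hw
    by_cases hwy : w = y
    · exact hwy ▸ hy'
    · exact subset_hull' I S' ⟨hw, hwy⟩
  have hhull : IsHullSet I S' := by
    have h1 : convexHullD I S ⊆ convexHullD I S' := by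
      intro v hv
      exact hv (convexHullD I S') ⟨hull_convex' I S', hSsub⟩
    rw [IsHullSet]
    apply Set.eq_univ_of_univ_subset
    calc Set.univ = convexHullD I S := hS.symm
      _ ⊆ convexHullD I S' := h1
  have hle : hullNumber I ≤ S'.ncard := Nat.sInf_le ⟨S', hhull, rfl⟩
  have hlt : S'.ncard < S.ncard := Set.ncard_diff_singleton_lt_of_mem hy S.toFinite
  omega

/-- If `T` (vertex set `W`, arc relation `A'`) is a subdigraph of
`D` that is a tournament and `S` is a minimum P3 hull set of `D`, then
`|S ∩ W| ≤ 2`. -/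
theorem stmt_13 {V : Type*} [Finite V] (A : V → V → Prop) (hA : IsOriented A)
    (W : Set V) (A' : V → V → Prop)
    (hsub : ∀ u v, A' u v → A u v ∧ u ∈ W ∧ v ∈ W)
    (hT : IsTournament (fun a b : W => A' a.1 b.1))
    (S : Set V) (hS : IsHullSet (p3Interval A) S)
    (hmin : S.ncard = hullNumber (p3Interval A)) :
    (S ∩ W).ncard ≤ 2 := by
  by_contra h
  push_neg at h
  obtain ⟨a, ha, b, hb, c, hc, hab, hac, hbc⟩ :=
    (Set.two_lt_ncard ((S ∩ W).toFinite)).1 h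
  obtain ⟨haS, haW⟩ := ha
  obtain ⟨hbS, hbW⟩ := hb
  obtain ⟨hcS, hcW⟩ := hc
  have h1 : A' a b ∨ A' b a := hT.2 ⟨a, haW⟩ ⟨b, hbW⟩ (by simpa [Subtype.ext_iff] using hab)
  have h2 : A' b c ∨ A' c b := hT.2 ⟨b, hbW⟩ ⟨c, hcW⟩ (by simpa [Subtype.ext_iff] using hbc)
  have h3 : A' a c ∨ A' c a := hT.2 ⟨a, haW⟩ ⟨c, hcW⟩ (by simpa [Subtype.ext_iff] using hac)
  have arc : ∀ u v, A' u v → A u v := fun u v h => (hsub u v h).1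
  have mid : ∀ x y z : V, A x y → A y z → y ∈ p3Interval A x z := by
    intro x y z h1 h2
    exact Set.mem_union_right _ (Or.inl ⟨h1, h2⟩)
  rcases h1 with hab' | hba' <;> rcases h2 with hbc' | hcb' <;> rcases h3 with hac' | hca'
  -- a→b, b→c : b middle of (a,c)
  · exact key_contra _ S hS hmin a b c haS hbS hcS hab hbc.symm
      (mid a b c (arc _ _ hab') (arc _ _ hbc'))
  · exact key_contra _ S hS hmin a b c haS hbS hcS hab hbc.symm
      (mid a b c (arc _ _ hab') (arc _ _ hbc'))
  -- a→b, c→b, a→c : c middle of (a,b)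
  · exact key_contra _ S hS hmin a c b haS hcS hbS hac hbc
      (mid a c b (arc _ _ hac') (arc _ _ hcb'))
  -- a→b, c→b, c→a : a middle of (c,b)
  · exact key_contra _ S hS hmin c a b hcS haS hbS hac.symm hab.symm
      (mid c a b (arc _ _ hca') (arc _ _ hab'))
  -- b→a, b→c, a→c : a middle of (b,c)
  · exact key_contra _ S hS hmin b a c hbS haS hcS hab.symm hac.symm
      (mid b a c (arc _ _ hba') (arc _ _ hac'))
  -- b→a, b→c, c→a : c middle of (b,a)
  · exact key_contra _ S hS hmin b c a hbS hcS haS hbc hac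
      (mid b c a (arc _ _ hbc') (arc _ _ hca'))
  -- b→a, c→b : b middle of (c,a)
  · exact key_contra _ S hS hmin c b a hcS hbS haS hbc.symm hab
      (mid c b a (arc _ _ hcb') (arc _ _ hba'))
  · exact key_contra _ S hS hmin c b a hcS hbS haS hbc.symm hab
      (mid c b a (arc _ _ hcb') (arc _ _ hba'))
end
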